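/- Let α₂, α₃, α₄ > 0 and ρ ∈ (0, 1), and set d = α₃(1 − ρ²). Define Q(γ) = α₂(γ d + α₄)/(γ d + α₄ − α₂) + γ on the domain D = {γ ≥ 0 : γ d + α₄ − α₂ > 0}. Then Q attains its minimum over D at γ* where: γ* = 0 if α₄/α₂ > 1 + √d, and γ* = (α₂√d + α₂ − α₄)/d otherwise; in the second case γ* ≥ 0 and γ* d + α₄ − α₂ = α₂√d > 0. -/

import Mathlib

/-- Suboptimal cooperative-jamming total-power minimization (nulling
the jamming at the destination): `Q(γ) = α₂(γd + α₄)/(γd + α₄ − α₂) + γ` attains its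
minimum over `D = {γ ≥ 0 : γd + α₄ − α₂ > 0}` at `γ* = 0` if `α₄/α₂ > 1 + √d`, and at
`γ* = (α₂√d + α₂ − α₄)/d` otherwise, in which case `γ* ≥ 0` and
`γ*d + α₄ − α₂ = α₂√d > 0`. -/
theorem stmt18 (α₂ α₃ α₄ ρ : ℝ) (hα₂ : 0 < α₂) (hα₃ : 0 < α₃) (hα₄ : 0 < α₄)
    (hρ0 : 0 < ρ) (hρ1 : ρ < 1)
    (d : ℝ) (hd : d = α₃ * (1 - ρ ^ 2))
    (Q : ℝ → ℝ) (hQ : ∀ γ, Q γ = α₂ * (γ * d + α₄) / (γ * d + α₄ - α₂) + γ) :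
    ((1 + Real.sqrt d < α₄ / α₂) →
      (0 ≤ (0 : ℝ) ∧ 0 < 0 * d + α₄ - α₂ ∧
        ∀ γ : ℝ, 0 ≤ γ → 0 < γ * d + α₄ - α₂ → Q 0 ≤ Q γ)) ∧
    (¬ (1 + Real.sqrt d < α₄ / α₂) →
      (0 ≤ (α₂ * Real.sqrt d + α₂ - α₄) / d ∧
        ((α₂ * Real.sqrt d + α₂ - α₄) / d) * d + α₄ - α₂ = α₂ * Real.sqrt d ∧
        0 < α₂ * Real.sqrt d ∧
        ∀ γ : ℝ, 0 ≤ γ → 0 < γ * d + α₄ - α₂ →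
          Q ((α₂ * Real.sqrt d + α₂ - α₄) / d) ≤ Q γ)) := by
  have hd0 : 0 < d := by
    have hρ2 : ρ ^ 2 < 1 := by nlinarith
    rw [hd]; exact mul_pos hα₃ (by linarith)
  set s := Real.sqrt d with hsdef
  have hs0 : 0 < s := Real.sqrt_pos.mpr hd0
  have hss : s * s = d := Real.mul_self_sqrt hd0.le
  constructor
  · intro hcase
    have h1 : α₂ * (1 + s) < α₄ := by
      have := (lt_div_iff₀ hα₂).mp hcase
      linarith
    have h0t : 0 < α₄ - α₂ := by nlinarith
    refine ⟨le_refl 0, by linarith, ?_⟩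
    intro γ hγ hγt
    rw [hQ, hQ]
    have e0 : α₂ * (0 * d + α₄) / (0 * d + α₄ - α₂) + 0
        = (α₂ * α₄) / (α₄ - α₂) := by ring_nf
    have eγ : α₂ * (γ * d + α₄) / (γ * d + α₄ - α₂) + γ
        = (α₂ * (γ * d + α₄) + γ * (γ * d + α₄ - α₂)) / (γ * d + α₄ - α₂) := by
      field_simp
    rw [e0, eγ, div_le_div_iff₀ (by linarith) hγt]
    -- difference = γ * ((α₄-α₂)*(γd+α₄-α₂) - α₂² d) ≥ 0
    have hA : α₂ * s < α₄ - α₂ := by nlinarith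
    have hB : α₄ - α₂ ≤ γ * d + α₄ - α₂ := by nlinarith [mul_nonneg hγ hd0.le]
    have hkey : α₂ ^ 2 * d ≤ (α₄ - α₂) * (γ * d + α₄ - α₂) := by
      nlinarith [mul_pos hα₂ hs0]
    nlinarith [mul_nonneg hγ (sub_nonneg.mpr hkey)]
  · intro hcase
    push_neg at hcase
    have h1 : α₄ ≤ α₂ * (1 + s) := by
      have := (div_le_iff₀ hα₂).mp hcase
      linarith
    have hnum : 0 ≤ α₂ * s + α₂ - α₄ := by nlinarith
    have hg0 : 0 ≤ (α₂ * s + α₂ - α₄) / d := div_nonneg hnum hd0.le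
    have hgd : (α₂ * s + α₂ - α₄) / d * d + α₄ - α₂ = α₂ * s := by
      field_simp; ring
    have hα₂s : 0 < α₂ * s := mul_pos hα₂ hs0
    refine ⟨hg0, hgd, hα₂s, ?_⟩
    intro γ hγ hγt
    set g := (α₂ * s + α₂ - α₄) / d with hgdef
    set B := γ * d + α₄ - α₂ with hBdef
    have hgQ : Q g = α₂ * (α₂ * s + α₂) / (α₂ * s) + g := by
      rw [hQ]
      have h2 : g * d + α₄ = α₂ * s + α₂ := by
        have : g * d + α₄ - α₂ = α₂ * s := hgd
        linarith
      rw [h2, show α₂ * s + α₂ - α₂ = α₂ * s by ring]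
    have hγQ : Q γ = α₂ * (γ * d + α₄) / B + γ := hQ γ
    rw [hgQ, hγQ]
    have expand1 : α₂ * (α₂ * s + α₂) / (α₂ * s) = α₂ + α₂ / s := by
      field_simp
    have expand2 : α₂ * (γ * d + α₄) / B = α₂ + α₂ ^ 2 / B := by
      have h3 : γ * d + α₄ = B + α₂ := by rw [hBdef]; ring
      rw [h3]
      field_simp [ne_of_gt hγt]
    rw [expand1, expand2]
    have hγg : γ - g = (B - α₂ * s) / d := by
      rw [hgdef, hBdef]
      field_simp; ring
    have hmain : α₂ / s - α₂ ^ 2 / B ≤ (B - α₂ * s) / d := by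
      have h4 : α₂ / s - α₂ ^ 2 / B = α₂ * (B - α₂ * s) / (s * B) := by
        field_simp [ne_of_gt hs0, ne_of_gt hγt]
      rw [h4, div_le_div_iff₀ (mul_pos hs0 hγt) hd0, ← hss]
      nlinarith [mul_nonneg hs0.le (sq_nonneg (B - α₂ * s))]
    linarith [hγg, hmain]
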